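/- Let U : X → (0,∞) be measurable, let u_* be the pointwise limit of the Fortet scheme, and assume: Φ[U](x) < ∞ for μ-almost every x; Ψ[U](y) < ∞ for ν-almost every y; and μ({x : p(x,y) > 0}) > 0 for ν-almost every y. If Φ[u_*](x) > 0 for μ-almost every x, then Ψ[u_*](y) < ∞ for ν-almost every y, and 0 < u_* = Φ[u_*] ≤ U holds μ-almost everywhere. -/

import Mathlib

open MeasureTheory ENNReal Filter Topology

noncomputable section

/-- `Ψ[u](y) = ∫_X p(x',y) u(x')⁻¹ dμ(x')`. -/
def fortetPsi {X Y : Type*} [MeasurableSpace X]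
    (p : X → Y → ℝ≥0∞) (μ : Measure X) (u : X → ℝ≥0∞) (y : Y) : ℝ≥0∞ :=
  ∫⁻ x, p x y * (u x)⁻¹ ∂μ

/-- The Fortet mapping `Φ[u](x) = ∫_Y p(x,y) Ψ[u](y)⁻¹ dν(y)`. -/
def fortetPhi {X Y : Type*} [MeasurableSpace X] [MeasurableSpace Y]
    (p : X → Y → ℝ≥0∞) (μ : Measure X) (ν : Measure Y) (u : X → ℝ≥0∞) (x : X) : ℝ≥0∞ :=
  ∫⁻ y, p x y * (fortetPsi p μ u y)⁻¹ ∂ν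

/-- The Fortet scheme: `fortetSeq p μ ν U n` is `u_{n+1}`, i.e. `u₁ = U` and
`u_{n+1} = max (U/(n+1)) (min (Φ[u_n]) U)`. -/
def fortetSeq {X Y : Type*} [MeasurableSpace X] [MeasurableSpace Y]
    (p : X → Y → ℝ≥0∞) (μ : Measure X) (ν : Measure Y) (U : X → ℝ≥0∞) :
    ℕ → X → ℝ≥0∞
  | 0 => U
  | n + 1 => fun x =>
      max (U x / (n + 2)) (min (fortetPhi p μ ν (fortetSeq p μ ν U n) x) (U x))

open Function

section Aux


variable {X Y : Type*} [MeasurableSpace X] [MeasurableSpace Y]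
  {μ : Measure X} {ν : Measure Y} {p : X → Y → ℝ≥0∞}

lemma fortetPsi_anti {u v : X → ℝ≥0∞} (h : ∀ x, u x ≤ v x) (y : Y) :
    fortetPsi p μ v y ≤ fortetPsi p μ u y :=
  lintegral_mono fun x => mul_le_mul_right (ENNReal.inv_le_inv.2 (h x)) _

lemma fortetPhi_mono {u v : X → ℝ≥0∞} (h : ∀ x, u x ≤ v x) (x : X) :
    fortetPhi p μ ν u x ≤ fortetPhi p μ ν v x :=
  lintegral_mono fun y => mul_le_mul_right (ENNReal.inv_le_inv.2 (fortetPsi_anti h y)) _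

lemma fortetPsi_meas [SFinite μ] (hp : Measurable (uncurry p))
    {u : X → ℝ≥0∞} (hu : Measurable u) : Measurable (fortetPsi p μ u) :=
  Measurable.lintegral_prod_left (hp.mul ((hu.comp measurable_fst).inv))

lemma fortetPhi_meas [SFinite μ] [SFinite ν] (hp : Measurable (uncurry p))
    {u : X → ℝ≥0∞} (hu : Measurable u) : Measurable (fortetPhi p μ ν u) :=
  Measurable.lintegral_prod_right
    (hp.mul (((fortetPsi_meas hp hu).comp measurable_snd).inv))

lemma fortetSeq_le {U : X → ℝ≥0∞} : ∀ n x, fortetSeq p μ ν U n x ≤ U x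
  | 0, x => le_rfl
  | n + 1, x => by
    refine max_le ?_ (min_le_right _ _)
    rw [div_eq_mul_inv]
    calc U x * ((n : ℝ≥0∞) + 2)⁻¹ ≤ U x * 1 :=
          mul_le_mul_right (ENNReal.inv_le_one.2 (by
            calc (1 : ℝ≥0∞) ≤ 2 := one_le_two
            _ ≤ (n : ℝ≥0∞) + 2 := le_add_self)) _
    _ = U x := mul_one _

lemma fortetSeq_pos {U : X → ℝ≥0∞} (hU_pos : ∀ x, 0 < U x) :
    ∀ n x, 0 < fortetSeq p μ ν U n x
  | 0, x => hU_pos x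
  | n + 1, x => by
    refine lt_of_lt_of_le ?_ (le_max_left _ _)
    exact ENNReal.div_pos (hU_pos x).ne' (by
      simp [ENNReal.add_eq_top, ENNReal.natCast_ne_top])

lemma fortetSeq_meas [SFinite μ] [SFinite ν] (hp : Measurable (uncurry p))
    {U : X → ℝ≥0∞} (hU : Measurable U) :
    ∀ n, Measurable (fortetSeq p μ ν U n)
  | 0 => hU
  | n + 1 =>
    (hU.div_const _).max ((fortetPhi_meas hp (fortetSeq_meas hp hU n)).min hU)

lemma fortetSeq_succ_le {U : X → ℝ≥0∞} :
    ∀ n x, fortetSeq p μ ν U (n + 1) x ≤ fortetSeq p μ ν U n x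
  | 0, x => fortetSeq_le 1 x
  | n + 1, x => by
    show max _ _ ≤ max _ _
    refine max_le_max ?_ (min_le_min (fortetPhi_mono (fortetSeq_succ_le n) x) le_rfl)
    rw [div_eq_mul_inv, div_eq_mul_inv]
    exact mul_le_mul_right
      (ENNReal.inv_le_inv.2 (add_le_add_left (Nat.cast_le.2 (Nat.le_succ n)) 2)) _

end Aux

theorem fortet_positivity_implies_fixed_point
    {X Y : Type*} [MeasurableSpace X] [MeasurableSpace Y]
    (μ : Measure X) (ν : Measure Y)
    [IsProbabilityMeasure μ] [IsProbabilityMeasure ν]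
    (p : X → Y → ℝ≥0∞)
    (hp_meas : Measurable (Function.uncurry p))
    (hp_fin : ∀ x y, p x y ≠ ∞)
    (U : X → ℝ≥0∞) (hU_meas : Measurable U)
    (hU_pos : ∀ x, 0 < U x) (hU_fin : ∀ x, U x ≠ ∞)
    (hPhiU : ∀ᵐ x ∂μ, fortetPhi p μ ν U x < ∞)
    (hPsiU : ∀ᵐ y ∂ν, fortetPsi p μ U y < ∞)
    (hpos_ae : ∀ᵐ y ∂ν, 0 < μ {x | 0 < p x y})
    (ustar : X → ℝ≥0∞)
    (hustar : ∀ x, Tendsto (fun n => fortetSeq p μ ν U n x) atTop (𝓝 (ustar x)))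
    (hPhi_pos : ∀ᵐ x ∂μ, 0 < fortetPhi p μ ν ustar x) :
    (∀ᵐ y ∂ν, fortetPsi p μ ustar y < ∞) ∧
      (∀ᵐ x ∂μ, 0 < ustar x ∧ ustar x = fortetPhi p μ ν ustar x ∧ ustar x ≤ U x) := by
  have hpx : ∀ y, Measurable fun x => p x y := fun y =>
    hp_meas.comp measurable_prodMk_right
  have hpy : ∀ x, Measurable fun y => p x y := fun x =>
    hp_meas.comp measurable_prodMk_left
  set v := fortetSeq p μ ν U with hv
  have hv0 : v 0 = U := rfl
  have hv_le : ∀ n x, v n x ≤ U x := fortetSeq_le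
  have hv_anti : ∀ x, Antitone fun n => v n x := fun x =>
    antitone_nat_of_succ_le fun n => fortetSeq_succ_le n x
  have hv_meas : ∀ n, Measurable (v n) := fortetSeq_meas hp_meas hU_meas
  have hstar_eq : ∀ x, ustar x = ⨅ n, v n x := fun x =>
    tendsto_nhds_unique (hustar x) (tendsto_atTop_iInf (hv_anti x))
  have hstar_meas : Measurable ustar := by
    have h : ustar = fun x => ⨅ n, v n x := funext hstar_eq
    rw [h]; exact Measurable.iInf hv_meas
  have hstar_le : ∀ x, ustar x ≤ U x := fun x =>
    (hstar_eq x).le.trans ((iInf_le _ 0).trans (hv0 ▸ le_rfl))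
  have hstar_fin : ∀ x, ustar x ≠ ∞ := fun x =>
    ((hstar_le x).trans_lt (lt_top_iff_ne_top.2 (hU_fin x))).ne
  -- Ψ[u*] = ⨆ Ψ[v n]
  have hPsi_sup : ∀ y, fortetPsi p μ ustar y = ⨆ n, fortetPsi p μ (v n) y := by
    intro y
    have h1 : ∀ x, p x y * (ustar x)⁻¹ = ⨆ n, p x y * (v n x)⁻¹ := fun x => by
      rw [hstar_eq x, ENNReal.inv_iInf, ENNReal.mul_iSup]
    rw [fortetPsi]
    simp_rw [h1]
    exact lintegral_iSup (fun n => (hpx y).mul (hv_meas n).inv)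
      (fun n m h x => mul_le_mul_right (ENNReal.inv_le_inv.2 (hv_anti x h)) _)
  -- Φ[u*] = ⨅ Φ[v n] a.e.
  have hPhi_inf : ∀ᵐ x ∂μ, fortetPhi p μ ν ustar x = ⨅ n, fortetPhi p μ ν (v n) x := by
    filter_upwards [hPhiU] with x hx
    have h1 : ∀ y, p x y * (fortetPsi p μ ustar y)⁻¹
        = ⨅ n, p x y * (fortetPsi p μ (v n) y)⁻¹ := fun y => by
      rw [hPsi_sup y, ENNReal.inv_iSup,
        ENNReal.mul_iInf (fun h => absurd h (hp_fin x y))]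
    rw [fortetPhi]
    simp_rw [h1]
    refine lintegral_iInf
      (fun n => (hpy x).mul (fortetPsi_meas hp_meas (hv_meas n)).inv)
      (fun n m h => fun y =>
        mul_le_mul_right (ENNReal.inv_le_inv.2
          (fortetPsi_anti (fun x' => hv_anti x' h) y)) _) ?_
    show (∫⁻ y, p x y * (fortetPsi p μ (v 0) y)⁻¹ ∂ν) ≠ ∞
    rw [hv0]
    exact hx.ne
  -- u* = min (Φ[u*]) U a.e.
  have hmin : ∀ᵐ x ∂μ, ustar x = min (fortetPhi p μ ν ustar x) (U x) := by
    filter_upwards [hPhi_inf] with x hx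
    have h1 : Tendsto (fun n => v (n + 1) x) atTop (𝓝 (ustar x)) :=
      (hustar x).comp (tendsto_add_atTop_nat 1)
    have h2 : Tendsto (fun n : ℕ => U x / ((n : ℝ≥0∞) + 2)) atTop (𝓝 0) := by
      have ha : Tendsto (fun n : ℕ => ((n : ℝ≥0∞) + 2)⁻¹) atTop (𝓝 0) :=
        tendsto_of_tendsto_of_tendsto_of_le_of_le tendsto_const_nhds
          ENNReal.tendsto_inv_nat_nhds_zero (fun n => zero_le)
          (fun n => ENNReal.inv_le_inv.2 le_self_add)
      have := ENNReal.Tendsto.const_mul ha (Or.inr (hU_fin x))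
      simpa [div_eq_mul_inv] using this
    have h3 : Tendsto (fun n => fortetPhi p μ ν (v n) x) atTop
        (𝓝 (fortetPhi p μ ν ustar x)) := by
      rw [hx]
      exact tendsto_atTop_iInf fun n m h => fortetPhi_mono (fun x' => hv_anti x' h) x
    have h4 := h2.max (h3.min (tendsto_const_nhds (x := U x)))
    rw [max_eq_right zero_le] at h4
    exact tendsto_nhds_unique h1 h4
  have hstar_pos : ∀ᵐ x ∂μ, 0 < ustar x := by
    filter_upwards [hmin, hPhi_pos] with x h1 h2
    rw [h1]; exact lt_min h2 (hU_pos x)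
  have hle_phi : ∀ᵐ x ∂μ, ustar x ≤ fortetPhi p μ ν ustar x := by
    filter_upwards [hmin] with x h1
    rw [h1]; exact min_le_left _ _
  have hPsi_star_meas : Measurable (fortetPsi p μ ustar) := fortetPsi_meas hp_meas hstar_meas
  have hswap : ∫⁻ x, fortetPhi p μ ν ustar x * (ustar x)⁻¹ ∂μ
      = ∫⁻ y, (fortetPsi p μ ustar y)⁻¹ * fortetPsi p μ ustar y ∂ν := by
    have hmeas2 : Measurable (uncurry fun x y =>
        p x y * (fortetPsi p μ ustar y)⁻¹ * (ustar x)⁻¹) :=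
      (hp_meas.mul ((hPsi_star_meas.comp measurable_snd).inv)).mul
        ((hstar_meas.comp measurable_fst).inv)
    calc ∫⁻ x, fortetPhi p μ ν ustar x * (ustar x)⁻¹ ∂μ
        = ∫⁻ x, ∫⁻ y, p x y * (fortetPsi p μ ustar y)⁻¹ * (ustar x)⁻¹ ∂ν ∂μ := by
          refine lintegral_congr fun x => ?_
          rw [fortetPhi, ← lintegral_mul_const (f := fun y => p x y * (fortetPsi p μ ustar y)⁻¹) _ ((hpy x).mul hPsi_star_meas.inv)]
      _ = ∫⁻ y, ∫⁻ x, p x y * (fortetPsi p μ ustar y)⁻¹ * (ustar x)⁻¹ ∂μ ∂ν :=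
          lintegral_lintegral_swap hmeas2.aemeasurable
      _ = ∫⁻ y, (fortetPsi p μ ustar y)⁻¹ * fortetPsi p μ ustar y ∂ν := by
          refine lintegral_congr fun y => ?_
          rw [fortetPsi, ← lintegral_const_mul (f := fun x => p x y * (ustar x)⁻¹) _ ((hpx y).mul hstar_meas.inv)]
          refine lintegral_congr fun x => ?_
          ring
  have hae_ge : ∀ᵐ x ∂μ, 1 ≤ fortetPhi p μ ν ustar x * (ustar x)⁻¹ := by
    filter_upwards [hle_phi, hstar_pos] with x h1 h2
    calc (1 : ℝ≥0∞) = ustar x * (ustar x)⁻¹ :=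
          (ENNReal.mul_inv_cancel h2.ne' (hstar_fin x)).symm
      _ ≤ _ := mul_le_mul_left h1 _
  have h_ge : (1 : ℝ≥0∞) ≤ ∫⁻ x, fortetPhi p μ ν ustar x * (ustar x)⁻¹ ∂μ := by
    calc (1 : ℝ≥0∞) = ∫⁻ _x, 1 ∂μ := by simp
      _ ≤ _ := lintegral_mono_ae hae_ge
  have hprod_le_one : ∀ a : ℝ≥0∞, a⁻¹ * a ≤ 1 := fun a => by
    rcases eq_or_ne a 0 with h | h
    · simp [h]
    rcases eq_or_ne a ∞ with h' | h'
    · simp [h']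
    rw [ENNReal.inv_mul_cancel h h']
  have h_le : ∫⁻ y, (fortetPsi p μ ustar y)⁻¹ * fortetPsi p μ ustar y ∂ν ≤ 1 := by
    calc _ ≤ ∫⁻ _y, (1 : ℝ≥0∞) ∂ν := lintegral_mono fun y => hprod_le_one _
      _ = 1 := by simp
  have h_eq1 : ∫⁻ y, (fortetPsi p μ ustar y)⁻¹ * fortetPsi p μ ustar y ∂ν = 1 :=
    le_antisymm h_le (h_ge.trans hswap.le)
  have hY : ∀ᵐ y ∂ν, (fortetPsi p μ ustar y)⁻¹ * fortetPsi p μ ustar y = 1 :=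
    ae_eq_of_ae_le_of_lintegral_le (μ := ν)
      (f := fun y => (fortetPsi p μ ustar y)⁻¹ * fortetPsi p μ ustar y)
      (g := fun _ => 1)
      (ae_of_all _ fun y => hprod_le_one _) (by rw [h_eq1]; exact one_ne_top)
      aemeasurable_const (by rw [h_eq1]; simp)
  have hconc1 : ∀ᵐ y ∂ν, fortetPsi p μ ustar y < ∞ := by
    filter_upwards [hY] with y hy
    by_contra h
    rw [not_lt, top_le_iff] at h
    rw [h] at hy
    simp at hy
  have h_eqX : ∫⁻ x, fortetPhi p μ ν ustar x * (ustar x)⁻¹ ∂μ = 1 := hswap.trans h_eq1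
  have hX : ∀ᵐ x ∂μ, (1 : ℝ≥0∞) = fortetPhi p μ ν ustar x * (ustar x)⁻¹ :=
    ae_eq_of_ae_le_of_lintegral_le (μ := μ)
      (f := fun _ => (1 : ℝ≥0∞))
      (g := fun x => fortetPhi p μ ν ustar x * (ustar x)⁻¹)
      hae_ge (by simp)
      ((fortetPhi_meas hp_meas hstar_meas).mul hstar_meas.inv).aemeasurable
      (by rw [h_eqX]; simp)
  have hfix : ∀ᵐ x ∂μ, ustar x = fortetPhi p μ ν ustar x := by
    filter_upwards [hX, hstar_pos] with x h1 h2
    calc ustar x = 1 * ustar x := (one_mul _).symm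
      _ = fortetPhi p μ ν ustar x * (ustar x)⁻¹ * ustar x := by rw [← h1]
      _ = fortetPhi p μ ν ustar x * ((ustar x)⁻¹ * ustar x) := mul_assoc _ _ _
      _ = fortetPhi p μ ν ustar x := by
          rw [ENNReal.inv_mul_cancel h2.ne' (hstar_fin x), mul_one]
  refine ⟨hconc1, ?_⟩
  filter_upwards [hstar_pos, hfix] with x h1 h2
  exact ⟨h1, h2, hstar_le x⟩

end
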